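/- Let H be a complex Hilbert space and S : H → H a bounded linear operator that is elliptic with constant c_S > 0. Let U, V ⊆ H be finite-dimensional subspaces with dim U = dim V, and suppose there is c_d > 0 such that for every u ∈ U: sup over nonzero v ∈ V of |⟪v, u⟫|/‖v‖ is ≥ c_d‖u‖. Then there exists a unique linear map P : U → V such that ⟪v, S(P u)⟫ = ⟪v, u⟫ for all u ∈ U and all v ∈ V; moreover, for all u ∈ U: ‖P u‖ ≤ c_S⁻¹‖u‖, ‖P u‖ ≥ (c_d/‖S‖)‖u‖, and Re ⟪P u, u⟫ ≥ c_S (c_d/‖S‖)² ‖u‖². -/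

import Mathlib

set_option maxHeartbeats 1000000


open scoped ComplexInnerProductSpace

/-- Abstract form of the construction `P = S_h⁻¹ ∘ I_h` in the proof of Lemma 5.2 of the paper:
given an elliptic bounded operator `S` on a complex Hilbert space and finite-dimensional
subspaces `U, V` of equal dimension satisfying a discrete inf-sup condition for the inner
product pairing, there is a unique linear map `P : U → V` with `⟪v, S(Pu)⟫ = ⟪v, u⟫` for all
`u ∈ U, v ∈ V`, and `P` satisfies `‖Pu‖ ≤ c_S⁻¹‖u‖`, `‖Pu‖ ≥ (c_d/‖S‖)‖u‖` and
`Re ⟪Pu, u⟫ ≥ c_S (c_d/‖S‖)² ‖u‖²`. -/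
theorem discrete_preconditioner_exists_unique_and_bounds
    {H : Type*} [NormedAddCommGroup H] [InnerProductSpace ℂ H] [CompleteSpace H]
    (S : H →L[ℂ] H) (cS cd : ℝ) (hcS : 0 < cS) (hcd : 0 < cd)
    (hS : ∀ u : H, cS * ‖u‖ ^ 2 ≤ (⟪u, S u⟫).re)
    (U V : Submodule ℂ H) [FiniteDimensional ℂ U] [FiniteDimensional ℂ V]
    (hdim : Module.finrank ℂ U = Module.finrank ℂ V)
    (hinfsup : ∀ u ∈ U,
      cd * ‖u‖ ≤ ⨆ v : {v : H // v ∈ V ∧ v ≠ 0}, ‖⟪(v : H), u⟫‖ / ‖(v : H)‖) :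
    ∃ P : U →ₗ[ℂ] V,
      (∀ (u : U) (v : V), ⟪(v : H), S (P u : H)⟫ = ⟪(v : H), (u : H)⟫) ∧
      (∀ Q : U →ₗ[ℂ] V,
        (∀ (u : U) (v : V), ⟪(v : H), S (Q u : H)⟫ = ⟪(v : H), (u : H)⟫) → Q = P) ∧
      (∀ u : U, ‖(P u : H)‖ ≤ cS⁻¹ * ‖(u : H)‖) ∧
      (∀ u : U, cd / ‖S‖ * ‖(u : H)‖ ≤ ‖(P u : H)‖) ∧
      (∀ u : U, cS * (cd / ‖S‖) ^ 2 * ‖(u : H)‖ ^ 2 ≤ (⟪(P u : H), (u : H)⟫).re) := by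
  haveI : CompleteSpace V := FiniteDimensional.complete ℂ V
  -- projection property
  have hproj : ∀ (x v : H), v ∈ V → ⟪v, ((Submodule.orthogonalProjectionOnto V x : V) : H)⟫ = ⟪v, x⟫ := by
    intro x v hv
    have h0 := Submodule.starProjection_inner_eq_zero (K := V) x v hv
    rw [inner_sub_left, sub_eq_zero] at h0
    have := congrArg (starRingEnd ℂ) h0
    simpa [inner_conj_symm] using this.symm
  -- the operator B = proj ∘ S on V
  set B : V →ₗ[ℂ] V :=
    ((Submodule.orthogonalProjectionOnto V : H →L[ℂ] V) : H →ₗ[ℂ] V).comp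
      ((S : H →ₗ[ℂ] H).comp V.subtype) with hBdef
  have hB : ∀ (w : V) (v : H), v ∈ V → ⟪v, ((B w : V) : H)⟫ = ⟪v, S (w : H)⟫ := by
    intro w v hv
    simpa [hBdef] using hproj (S (w : H)) v hv
  have hBinj : Function.Injective B := by
    intro w₁ w₂ h
    have h' : B (w₁ - w₂) = 0 := by rw [map_sub, h, sub_self]
    set w := w₁ - w₂ with hw
    have h2 : ⟪((w : V) : H), S ((w : V) : H)⟫ = 0 := by
      rw [← hB w w w.2, h']; simp
    have h3 := hS ((w : V) : H)
    rw [h2] at h3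
    simp only [Complex.zero_re] at h3
    have h4 : ‖((w : V) : H)‖ = 0 := by
      by_contra hne
      have hp : 0 < ‖((w : V) : H)‖ := lt_of_le_of_ne (norm_nonneg _) (Ne.symm hne)
      nlinarith [mul_pos hcS (mul_pos hp hp)]
    have : (w : V) = 0 := by
      ext; simpa using norm_eq_zero.mp h4
    exact sub_eq_zero.mp this
  have hBbij : Function.Bijective B :=
    ⟨hBinj, LinearMap.injective_iff_surjective.mp hBinj⟩
  set e : V ≃ₗ[ℂ] V := LinearEquiv.ofBijective B hBbij with hedef
  set P : U →ₗ[ℂ] V :=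
    (e.symm : V →ₗ[ℂ] V).comp
      (((Submodule.orthogonalProjectionOnto V : H →L[ℂ] V) : H →ₗ[ℂ] V).comp U.subtype) with hPdef
  have hBP : ∀ u : U, B (P u) = Submodule.orthogonalProjectionOnto V (u : H) := by
    intro u
    have : e (e.symm (Submodule.orthogonalProjectionOnto V (u : H))) = Submodule.orthogonalProjectionOnto V (u : H) :=
      e.apply_symm_apply _
    simpa [hPdef, hedef, LinearEquiv.ofBijective_apply] using this
  have hPprop : ∀ (u : U) (v : V), ⟪(v : H), S ((P u : V) : H)⟫ = ⟪(v : H), (u : H)⟫ := by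
    intro u v
    rw [← hB (P u) (v : H) v.2, hBP u, hproj (u : H) (v : H) v.2]
  refine ⟨P, hPprop, ?_, ?_, ?_, ?_⟩
  · -- uniqueness
    intro Q hQ
    ext u
    have key : B (Q u) = B (P u) := by
      have hin : ∀ v : V, ⟪(v : H), ((B (Q u) : V) : H) - ((B (P u) : V) : H)⟫ = 0 := by
        intro v
        rw [inner_sub_right, hB (Q u) (v : H) v.2, hB (P u) (v : H) v.2, hQ u v, hPprop u v,
          sub_self]
      have hd := hin (B (Q u) - B (P u))
      rw [Submodule.coe_sub] at hd
      have := inner_self_eq_zero.mp hd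
      have : ((B (Q u) : V) : H) = ((B (P u) : V) : H) := sub_eq_zero.mp this
      exact Subtype.ext this
    have : Q u = P u := hBinj key
    simp [this]
  · -- upper bound
    intro u
    have h1 : ⟪((P u : V) : H), S ((P u : V) : H)⟫ = ⟪((P u : V) : H), (u : H)⟫ :=
      hPprop u (P u)
    have h2 := hS ((P u : V) : H)
    rw [h1] at h2
    have h3 : (⟪((P u : V) : H), (u : H)⟫).re ≤ ‖((P u : V) : H)‖ * ‖(u : H)‖ := by
      calc (⟪((P u : V) : H), (u : H)⟫).re ≤ ‖⟪((P u : V) : H), (u : H)⟫‖ :=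
            Complex.re_le_norm _
        _ ≤ ‖((P u : V) : H)‖ * ‖(u : H)‖ := norm_inner_le_norm _ _
    rcases eq_or_lt_of_le (norm_nonneg ((P u : V) : H)) with h0 | h0
    · rw [← h0]
      positivity
    · rw [le_inv_mul_iff₀ hcS]
      nlinarith
  · -- lower bound
    intro u
    have key : cd * ‖(u : H)‖ ≤ ‖S‖ * ‖((P u : V) : H)‖ := by
      have h1 := hinfsup (u : H) u.2
      have h2 : (⨆ v : {v : H // v ∈ V ∧ v ≠ 0}, ‖⟪(v : H), (u : H)⟫‖ / ‖(v : H)‖)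
          ≤ ‖S ((P u : V) : H)‖ := by
        apply Real.iSup_le _ (norm_nonneg _)
        intro v
        rw [← hPprop u ⟨(v : H), v.2.1⟩]
        rw [div_le_iff₀ (norm_pos_iff.mpr v.2.2)]
        calc ‖⟪(v : H), S ((P u : V) : H)⟫‖ ≤ ‖(v : H)‖ * ‖S ((P u : V) : H)‖ :=
              norm_inner_le_norm _ _
          _ = ‖S ((P u : V) : H)‖ * ‖(v : H)‖ := mul_comm _ _
      have h3 : ‖S ((P u : V) : H)‖ ≤ ‖S‖ * ‖((P u : V) : H)‖ := S.le_opNorm _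
      linarith
    rcases eq_or_lt_of_le (norm_nonneg S) with hS0 | hS0
    · have hu0 : ‖(u : H)‖ = 0 := by
        rw [← hS0] at key
        nlinarith [norm_nonneg (u : H)]
      rw [hu0, mul_zero]
      exact norm_nonneg _
    · rw [div_mul_eq_mul_div, div_le_iff₀ hS0]
      linarith [key, mul_comm ‖S‖ ‖((P u : V) : H)‖]
  · -- coercivity
    intro u
    have h1 : ⟪((P u : V) : H), S ((P u : V) : H)⟫ = ⟪((P u : V) : H), (u : H)⟫ :=
      hPprop u (P u)
    have h2 := hS ((P u : V) : H)
    rw [h1] at h2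
    have hlow : cd / ‖S‖ * ‖(u : H)‖ ≤ ‖((P u : V) : H)‖ := by
      -- re-derive lower bound (as above)
      have key : cd * ‖(u : H)‖ ≤ ‖S‖ * ‖((P u : V) : H)‖ := by
        have h1' := hinfsup (u : H) u.2
        have h2' : (⨆ v : {v : H // v ∈ V ∧ v ≠ 0}, ‖⟪(v : H), (u : H)⟫‖ / ‖(v : H)‖)
            ≤ ‖S ((P u : V) : H)‖ := by
          apply Real.iSup_le _ (norm_nonneg _)
          intro v
          rw [← hPprop u ⟨(v : H), v.2.1⟩]
          rw [div_le_iff₀ (norm_pos_iff.mpr v.2.2)]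
          calc ‖⟪(v : H), S ((P u : V) : H)⟫‖ ≤ ‖(v : H)‖ * ‖S ((P u : V) : H)‖ :=
                norm_inner_le_norm _ _
            _ = ‖S ((P u : V) : H)‖ * ‖(v : H)‖ := mul_comm _ _
        have h3' : ‖S ((P u : V) : H)‖ ≤ ‖S‖ * ‖((P u : V) : H)‖ := S.le_opNorm _
        linarith
      rcases eq_or_lt_of_le (norm_nonneg S) with hS0 | hS0
      · have hu0 : ‖(u : H)‖ = 0 := by
          rw [← hS0] at key
          nlinarith [norm_nonneg (u : H)]
        rw [hu0, mul_zero]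
        exact norm_nonneg _
      · rw [div_mul_eq_mul_div, div_le_iff₀ hS0]
        linarith [key, mul_comm ‖S‖ ‖((P u : V) : H)‖]
    have ha : (0:ℝ) ≤ cd / ‖S‖ * ‖(u : H)‖ := by positivity
    have hsq : (cd / ‖S‖ * ‖(u : H)‖) * (cd / ‖S‖ * ‖(u : H)‖)
        ≤ ‖((P u : V) : H)‖ * ‖((P u : V) : H)‖ := mul_self_le_mul_self ha hlow
    nlinarith [mul_le_mul_of_nonneg_left hsq hcS.le]
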